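/- Suppose F is a field in which x^k - 1 has k distinct roots. Let C be the k×k circulant matrix over F with first column (a_0, ..., a_{k-1})^T, and let f(x) = a_0 + a_1 x + ... + a_{k-1}x^{k-1}. Then rank(C) = k - deg(gcd(f(x), x^k - 1)). -/

import Mathlib

open Polynomial

theorem stmt_5 {F : Type*} [Field F] [DecidableEq F] (k : ℕ) (hk : 0 < k)
    (hroots : ∃ ω : F, IsPrimitiveRoot ω k) (a : Fin k → F) :
    (Matrix.circulant a).rank =
      k - (normalize (EuclideanDomain.gcd
        (∑ i : Fin k, C (a i) * X ^ (i : ℕ)) (X ^ k - 1))).natDegree := by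
  haveI : NeZero k := ⟨hk.ne'⟩
  obtain ⟨ω, hω⟩ := hroots
  set f : F[X] := ∑ i : Fin k, C (a i) * X ^ (i : ℕ) with hf
  set P : F[X] := X ^ k - 1 with hP
  set g : F[X] := EuclideanDomain.gcd f P with hg
  -- basic facts
  have hP0 : P ≠ 0 := by
    have := Polynomial.X_pow_sub_C_ne_zero hk (1 : F)
    simpa [hP] using this
  have hg0 : g ≠ 0 := by
    intro h
    exact hP0 (EuclideanDomain.gcd_eq_zero_iff.mp h).2
  have hgP : g ∣ P := EuclideanDomain.gcd_dvd_right f P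
  have hgf : g ∣ f := EuclideanDomain.gcd_dvd_left f P
  have hPsplits : P.Splits := by
    simpa [hP] using Polynomial.X_pow_sub_one_splits hω
  have hgsplits : g.Splits :=
    hPsplits.of_dvd hP0 hgP
  -- P is separable (its roots, the k-th roots of unity, are distinct)
  have hProots : P.roots = Polynomial.nthRoots k (1 : F) := by
    simp [hP, Polynomial.nthRoots]
  have hPsep : P.Separable := by
    rw [← Polynomial.nodup_roots_iff_of_splits hP0 hPsplits, hProots]
    exact hω.nthRoots_nodup one_ne_zero
  have hgsep : g.Separable := hPsep.of_dvd hgP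
  -- pow helper
  have hpowmod : ∀ z : F, z ^ k = 1 → ∀ m : ℕ, z ^ (m % k) = z ^ m := by
    intro z hz m
    conv_rhs => rw [← Nat.mod_add_div m k]
    rw [pow_add, pow_mul, hz, one_pow, mul_one]
  -- the eigenvalues
  set e : Fin k → F := fun i => f.eval (ω ^ (i : ℕ)) with he
  -- the Vandermonde matrix
  set W : Matrix (Fin k) (Fin k) F :=
    Matrix.vandermonde (fun i : Fin k => ω ^ (i : ℕ)) with hW
  have hWdet : IsUnit W.det := by
    rw [isUnit_iff_ne_zero, hW]
    rw [Matrix.det_vandermonde_ne_zero_iff]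
    intro i j hij
    exact Fin.ext (hω.pow_inj i.isLt j.isLt hij)
  -- key identity : W * circulant a = diagonal e * W
  have hkey : W * Matrix.circulant a = Matrix.diagonal e * W := by
    ext i j
    rw [Matrix.diagonal_mul]
    have hev : e i = ∑ n : Fin k, a n * ω ^ ((i : ℕ) * (n : ℕ)) := by
      rw [he, hf]
      simp only [Polynomial.eval_finset_sum, Polynomial.eval_mul, Polynomial.eval_C,
        Polynomial.eval_pow, Polynomial.eval_X]
      refine Finset.sum_congr rfl fun n _ => ?_
      rw [← pow_mul]
    have : (W * Matrix.circulant a) i j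
        = ∑ m : Fin k, ω ^ ((i : ℕ) * (m : ℕ)) * a (m - j) := by
      simp [Matrix.mul_apply, hW, Matrix.vandermonde, Matrix.circulant, pow_mul]
    rw [this]
    rw [← Equiv.sum_comp (Equiv.addRight j) (fun m : Fin k => ω ^ ((i : ℕ) * (m : ℕ)) * a (m - j))]
    have hterm : ∀ n : Fin k,
        ω ^ ((i : ℕ) * (((n + j : Fin k)) : ℕ)) * a ((n + j) - j)
          = (a n * ω ^ ((i : ℕ) * (n : ℕ))) * ω ^ ((i : ℕ) * (j : ℕ)) := by
      intro n
      have hz : (ω ^ (i : ℕ)) ^ k = 1 := by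
        rw [← pow_mul, mul_comm, pow_mul, hω.pow_eq_one, one_pow]
      rw [Fin.val_add, add_sub_cancel_right, pow_mul, hpowmod _ hz, ← pow_mul, mul_add, pow_add]
      ring
    calc ∑ m : Fin k, ω ^ ((i : ℕ) * ((Equiv.addRight j m : Fin k) : ℕ))
            * a (Equiv.addRight j m - j)
        = ∑ n : Fin k, (a n * ω ^ ((i : ℕ) * (n : ℕ))) * ω ^ ((i : ℕ) * (j : ℕ)) := by
          refine Finset.sum_congr rfl fun n _ => ?_
          exact hterm n
      _ = e i * W i j := by
          rw [← Finset.sum_mul, ← hev]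
          simp [hW, Matrix.vandermonde, pow_mul]
  -- rank computation
  have hrank : (Matrix.circulant a).rank = Fintype.card {i : Fin k // e i ≠ 0} := by
    have h1 : (W * Matrix.circulant a).rank = (Matrix.circulant a).rank :=
      Matrix.rank_mul_eq_right_of_isUnit_det W _ hWdet
    have h2 : (Matrix.diagonal e * W).rank = (Matrix.diagonal e).rank :=
      Matrix.rank_mul_eq_left_of_isUnit_det W _ hWdet
    rw [← h1, hkey, h2, Matrix.rank_diagonal]
  -- the roots of g are exactly the ω^i with f(ω^i) = 0
  have hrootiff : ∀ x : F, g.IsRoot x ↔ (f.eval x = 0 ∧ x ^ k = 1) := by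
    intro x
    constructor
    · intro hx
      have hdvd : X - C x ∣ g := Polynomial.dvd_iff_isRoot.mpr hx
      have h1 : f.eval x = 0 := Polynomial.dvd_iff_isRoot.mp (hdvd.trans hgf)
      have h2 : P.eval x = 0 := Polynomial.dvd_iff_isRoot.mp (hdvd.trans hgP)
      refine ⟨h1, ?_⟩
      have : x ^ k - 1 = 0 := by simpa [hP] using h2
      linear_combination this
    · rintro ⟨h1, h2⟩
      have hd1 : X - C x ∣ f := Polynomial.dvd_iff_isRoot.mpr h1
      have hd2 : X - C x ∣ P := by
        refine Polynomial.dvd_iff_isRoot.mpr ?_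
        simp [hP, Polynomial.IsRoot, h2]
      exact Polynomial.dvd_iff_isRoot.mp (EuclideanDomain.dvd_gcd hd1 hd2)
  have himg : g.roots.toFinset
      = Finset.image (fun i : Fin k => ω ^ (i : ℕ))
          (Finset.univ.filter fun i : Fin k => f.eval (ω ^ (i : ℕ)) = 0) := by
    ext x
    simp only [Multiset.mem_toFinset, Polynomial.mem_roots hg0, Finset.mem_image,
      Finset.mem_filter, Finset.mem_univ, true_and]
    rw [hrootiff x]
    constructor
    · rintro ⟨h1, h2⟩
      obtain ⟨i, hik, hi⟩ := hω.eq_pow_of_pow_eq_one h2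
      exact ⟨⟨i, hik⟩, by rwa [hi], hi⟩
    · rintro ⟨i, hi, rfl⟩
      refine ⟨hi, ?_⟩
      rw [← pow_mul, mul_comm, pow_mul, hω.pow_eq_one, one_pow]
  -- degree of g
  have hdeg : g.natDegree
      = (Finset.univ.filter fun i : Fin k => f.eval (ω ^ (i : ℕ)) = 0).card := by
    have h1 : g.natDegree = Multiset.card g.roots :=
      (Polynomial.splits_iff_card_roots.mp hgsplits).symm
    have h2 : Multiset.card g.roots = g.roots.toFinset.card :=
      (Multiset.toFinset_card_of_nodup (Polynomial.nodup_roots hgsep)).symm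
    have hinj : Function.Injective (fun i : Fin k => ω ^ (i : ℕ)) := by
      intro i j hij
      exact Fin.ext (hω.pow_inj i.isLt j.isLt hij)
    rw [h1, h2, himg, Finset.card_image_of_injective _ hinj]
  -- normalize doesn't change natDegree
  have hnorm : (normalize g).natDegree = g.natDegree := by
    rw [Polynomial.natDegree, Polynomial.natDegree, Polynomial.degree_normalize]
  -- counting
  have hcount : Fintype.card {i : Fin k // e i ≠ 0}
      = k - (Finset.univ.filter fun i : Fin k => f.eval (ω ^ (i : ℕ)) = 0).card := by
    rw [Fintype.card_subtype]
    have hsum := Finset.card_filter_add_card_filter_not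
      (s := (Finset.univ : Finset (Fin k)))
      (p := fun i : Fin k => f.eval (ω ^ (i : ℕ)) = 0)
    have : (Finset.univ.filter fun i : Fin k => ¬ f.eval (ω ^ (i : ℕ)) = 0)
        = (Finset.univ.filter fun i : Fin k => e i ≠ 0) := by
      simp [he]
    rw [this] at hsum
    simp only [Finset.card_univ, Fintype.card_fin] at hsum
    omega
  rw [hrank, hnorm, hdeg, hcount]
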